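/- Let α, β, γ be nonzero real numbers. If ⌊α·⌊β·x⌋⌋ ≥ ⌊β·⌊α·x⌋⌋ for all real x, and ⌊β·⌊γ·x⌋⌋ ≥ ⌊γ·⌊β·x⌋⌋ for all real x, then ⌊α·⌊γ·x⌋⌋ ≥ ⌊γ·⌊α·x⌋⌋ for all real x. In other words, the nonnegative commutator relation [f_α, f_β] ≥ 0 is transitive on nonzero dilation factors. -/

import Mathlib

private lemma mul_div_self_eq (c : ℝ) (hc : c ≠ 0) (n : ℤ) : c * ((n:ℝ)/c) = (n:ℝ) := by
  field_simp

private lemma neg_floor_ge (c : ℝ) (hc : c < 0) (n : ℤ) :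
    (n:ℝ) ≤ c * (⌊(n:ℝ)/c⌋ : ℝ) := by
  have h1 : (⌊(n:ℝ)/c⌋ : ℝ) ≤ (n:ℝ)/c := Int.floor_le _
  have h2 := mul_le_mul_of_nonpos_left h1 hc.le
  rw [mul_div_self_eq c hc.ne n] at h2
  exact h2

private lemma neg_floor_lt (c : ℝ) (hc : c < 0) (n : ℤ) :
    c * ((⌊(n:ℝ)/c⌋ : ℝ) + 1) < (n:ℝ) := by
  have h1 : (n:ℝ)/c < (⌊(n:ℝ)/c⌋ : ℝ) + 1 := Int.lt_floor_add_one _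
  have h2 := mul_lt_mul_of_neg_left h1 hc
  rw [mul_div_self_eq c hc.ne n] at h2
  exact h2

private lemma pos_ceil_ge (c : ℝ) (hc : 0 < c) (n : ℤ) :
    (n:ℝ) ≤ c * (⌈(n:ℝ)/c⌉ : ℝ) := by
  have h1 : (n:ℝ)/c ≤ (⌈(n:ℝ)/c⌉ : ℝ) := Int.le_ceil _
  have h2 := mul_le_mul_of_nonneg_left h1 hc.le
  rw [mul_div_self_eq c hc.ne' n] at h2
  exact h2

private lemma mixed_neg_pos (α β : ℝ) (hα : α < 0) (hβ : 0 < β) :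
    ∀ x : ℝ, ⌊α * (⌊β * x⌋ : ℝ)⌋ ≥ ⌊β * (⌊α * x⌋ : ℝ)⌋ := by
  intro x
  apply Int.floor_le_floor
  have e1 : β * (⌊α * x⌋ : ℝ) ≤ β * (α * x) :=
    mul_le_mul_of_nonneg_left (Int.floor_le _) hβ.le
  have e2 : α * (β * x) ≤ α * (⌊β * x⌋ : ℝ) :=
    mul_le_mul_of_nonpos_left (Int.floor_le _) hα.le
  calc β * (⌊α * x⌋ : ℝ) ≤ β * (α * x) := e1
    _ = α * (β * x) := by ring
    _ ≤ α * (⌊β * x⌋ : ℝ) := e2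

private lemma mixed_pos_neg (α β : ℝ) (hα : 0 < α) (hβ : β < 0) :
    ¬ (∀ x : ℝ, ⌊α * (⌊β * x⌋ : ℝ)⌋ ≥ ⌊β * (⌊α * x⌋ : ℝ)⌋) := by
  intro h
  have hx := h ((2 * α)⁻¹)
  have hxpos : (0:ℝ) < (2 * α)⁻¹ := by positivity
  have h1 : α * (2 * α)⁻¹ = 1/2 := by field_simp
  have hfl : ⌊α * (2 * α)⁻¹⌋ = 0 := by rw [h1]; norm_num
  have hneg : β * (2 * α)⁻¹ < 0 := mul_neg_of_neg_of_pos hβ hxpos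
  have h2 : ⌊β * (2 * α)⁻¹⌋ ≤ -1 := by
    have : ⌊β * (2 * α)⁻¹⌋ < 0 := Int.floor_lt.mpr (by exact_mod_cast hneg)
    omega
  have h3 : α * (⌊β * (2 * α)⁻¹⌋ : ℝ) ≤ α * (-1) :=
    mul_le_mul_of_nonneg_left (by exact_mod_cast h2) hα.le
  have h4 : ⌊α * (⌊β * (2 * α)⁻¹⌋ : ℝ)⌋ < 0 := Int.floor_lt.mpr (by push_cast; nlinarith)
  rw [hfl] at hx
  have h0 : ⌊β * ((0:ℤ):ℝ)⌋ = 0 := by norm_num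
  rw [h0] at hx
  omega

private lemma pos_forward (α β : ℝ) (hα : 0 < α) (hβ : 0 < β)
    (h : ∀ x : ℝ, ⌊α * (⌊β * x⌋ : ℝ)⌋ ≥ ⌊β * (⌊α * x⌋ : ℝ)⌋) :
    ∀ n : ℤ, α * (⌈(n:ℝ)/α⌉ : ℝ) ≤ β * (⌈(n:ℝ)/β⌉ : ℝ) := by
  intro n
  set m : ℤ := ⌈(n:ℝ)/β⌉ with hm
  have hx := h ((m:ℝ)/α)
  rw [mul_div_self_eq α hα.ne' m, Int.floor_intCast] at hx
  set k : ℤ := ⌊β * ((m:ℝ)/α)⌋ with hk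
  have hn1 : n ≤ ⌊β * (m:ℝ)⌋ := Int.le_floor.mpr (pos_ceil_ge β hβ n)
  have hn2 : n ≤ ⌊α * (k:ℝ)⌋ := le_trans hn1 hx
  have hn3 : (n:ℝ) ≤ α * (k:ℝ) := Int.le_floor.mp hn2
  have hceil : (⌈(n:ℝ)/α⌉ : ℤ) ≤ k := by
    apply Int.ceil_le.mpr
    rw [div_le_iff₀ hα]
    linarith [mul_comm α (k:ℝ)]
  have hck : α * (⌈(n:ℝ)/α⌉ : ℝ) ≤ α * (k:ℝ) :=
    mul_le_mul_of_nonneg_left (by exact_mod_cast hceil) hα.le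
  have hkb : α * (k:ℝ) ≤ β * (m:ℝ) := by
    have h5 : (k:ℝ) ≤ β * ((m:ℝ)/α) := Int.floor_le _
    have h6 : α * (k:ℝ) ≤ α * (β * ((m:ℝ)/α)) := mul_le_mul_of_nonneg_left h5 hα.le
    have h7 : α * (β * ((m:ℝ)/α)) = β * (m:ℝ) := by field_simp
    linarith
  linarith

private lemma pos_backward (α β : ℝ) (hα : 0 < α) (hβ : 0 < β)
    (h : ∀ n : ℤ, α * (⌈(n:ℝ)/α⌉ : ℝ) ≤ β * (⌈(n:ℝ)/β⌉ : ℝ)) :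
    ∀ x : ℝ, ⌊α * (⌊β * x⌋ : ℝ)⌋ ≥ ⌊β * (⌊α * x⌋ : ℝ)⌋ := by
  intro x
  set n : ℤ := ⌊β * (⌊α * x⌋ : ℝ)⌋ with hn
  set m : ℤ := ⌊α * x⌋ with hm
  apply Int.le_floor.mpr
  have h1 : (n:ℝ) ≤ β * (m:ℝ) := Int.floor_le _
  have h2 : (⌈(n:ℝ)/β⌉ : ℤ) ≤ m := by
    apply Int.ceil_le.mpr
    rw [div_le_iff₀ hβ]
    linarith [mul_comm β (m:ℝ)]
  have h3 : (m:ℝ) ≤ α * x := Int.floor_le _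
  have h4 : α * (⌈(n:ℝ)/α⌉ : ℝ) ≤ β * (m:ℝ) :=
    le_trans (h n) (mul_le_mul_of_nonneg_left (by exact_mod_cast h2) hβ.le)
  have h5 : β * (m:ℝ) ≤ β * (α * x) := mul_le_mul_of_nonneg_left h3 hβ.le
  have h6 : (⌈(n:ℝ)/α⌉ : ℝ) ≤ β * x := by
    have : α * (⌈(n:ℝ)/α⌉ : ℝ) ≤ α * (β * x) := by nlinarith
    exact le_of_mul_le_mul_left (by linarith) hα
  have h7 : (⌈(n:ℝ)/α⌉ : ℤ) ≤ ⌊β * x⌋ := Int.le_floor.mpr h6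
  calc (n:ℝ) ≤ α * (⌈(n:ℝ)/α⌉ : ℝ) := pos_ceil_ge α hα n
    _ ≤ α * (⌊β * x⌋ : ℝ) := mul_le_mul_of_nonneg_left (by exact_mod_cast h7) hα.le

private lemma neg_forward (α β : ℝ) (hα : α < 0) (hβ : β < 0)
    (h : ∀ x : ℝ, ⌊α * (⌊β * x⌋ : ℝ)⌋ ≥ ⌊β * (⌊α * x⌋ : ℝ)⌋) :
    ∀ n : ℤ, α * ((⌊(n:ℝ)/α⌋ : ℝ) + 1) ≤ β * ((⌊(n:ℝ)/β⌋ : ℝ) + 1) := by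
  intro n
  by_contra hcon
  push_neg at hcon
  set P : ℝ := (⌊(n:ℝ)/α⌋ : ℝ) + 1 with hP
  set Q : ℝ := (⌊(n:ℝ)/β⌋ : ℝ) + 1 with hQ
  -- hcon : β * Q < α * P
  have hαβ : 0 < α * β := mul_pos_of_neg_of_neg hα hβ
  set a : ℝ := P/β with ha
  set b : ℝ := Q/α with hb
  have hab : b < a := by
    have e1 : b * (α*β) = β * Q := by rw [hb]; field_simp [hα.ne, hβ.ne]
    have e2 : a * (α*β) = α * P := by rw [ha]; field_simp [hα.ne, hβ.ne]
    have : b * (α*β) < a * (α*β) := by rw [e1, e2]; exact hcon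
    exact lt_of_mul_lt_mul_right this hαβ.le
  set x : ℝ := (a + b)/2 with hx
  have hbx : b < x := by rw [hx]; linarith
  have hxa : x < a := by rw [hx]; linarith
  -- n ≤ ⌊β * ⌊α x⌋⌋
  have hax : α * x < Q := by
    have h1 : α * x < α * b := mul_lt_mul_of_neg_left hbx hα
    have h2 : α * b = Q := by rw [hb, ← mul_div_assoc]; exact mul_div_cancel_left₀ Q hα.ne
    linarith
  have hfx : ⌊α * x⌋ ≤ ⌊(n:ℝ)/β⌋ := by
    have : ⌊α * x⌋ < ⌊(n:ℝ)/β⌋ + 1 := Int.floor_lt.mpr (by push_cast; rw [hQ] at hax; linarith)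
    omega
  have hlow : n ≤ ⌊β * (⌊α * x⌋ : ℝ)⌋ := by
    apply Int.le_floor.mpr
    have h1 : β * (⌊(n:ℝ)/β⌋ : ℝ) ≤ β * (⌊α * x⌋ : ℝ) :=
      mul_le_mul_of_nonpos_left (by exact_mod_cast hfx) hβ.le
    linarith [neg_floor_ge β hβ n]
  -- ⌊α * ⌊β x⌋⌋ < n
  have hbx2 : P < β * x := by
    have h1 : β * a < β * x := mul_lt_mul_of_neg_left hxa hβ
    have h2 : β * a = P := by rw [ha, ← mul_div_assoc]; exact mul_div_cancel_left₀ P hβ.ne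
    linarith
  have hfbx : ⌊(n:ℝ)/α⌋ + 1 ≤ ⌊β * x⌋ := by
    apply Int.le_floor.mpr
    push_cast
    rw [hP] at hbx2; linarith
  have hup : ⌊α * (⌊β * x⌋ : ℝ)⌋ < n := by
    apply Int.floor_lt.mpr
    have h1 : α * (⌊β * x⌋ : ℝ) ≤ α * P := by
      apply mul_le_mul_of_nonpos_left _ hα.le
      rw [hP]; exact_mod_cast hfbx
    have h2 : α * P < (n:ℝ) := neg_floor_lt α hα n
    linarith
  have := h x
  omega

private lemma neg_backward (α β : ℝ) (hα : α < 0) (hβ : β < 0)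
    (h : ∀ n : ℤ, α * ((⌊(n:ℝ)/α⌋ : ℝ) + 1) ≤ β * ((⌊(n:ℝ)/β⌋ : ℝ) + 1)) :
    ∀ x : ℝ, ⌊α * (⌊β * x⌋ : ℝ)⌋ ≥ ⌊β * (⌊α * x⌋ : ℝ)⌋ := by
  intro x
  set n : ℤ := ⌊β * (⌊α * x⌋ : ℝ)⌋ with hn
  set m : ℤ := ⌊α * x⌋ with hm
  apply Int.le_floor.mpr
  have hαβ : 0 < α * β := mul_pos_of_neg_of_neg hα hβ
  set P : ℝ := (⌊(n:ℝ)/α⌋ : ℝ) + 1 with hP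
  set Q : ℝ := (⌊(n:ℝ)/β⌋ : ℝ) + 1 with hQ
  have h1 : (n:ℝ) ≤ β * (m:ℝ) := Int.floor_le _
  have h2 : m ≤ ⌊(n:ℝ)/β⌋ := by
    apply Int.le_floor.mpr
    rw [le_div_iff_of_neg hβ]
    linarith [mul_comm β (m:ℝ)]
  have h3 : α * x < (m:ℝ) + 1 := Int.lt_floor_add_one _
  have h4 : α * x < Q := by
    have : ((m:ℝ)) + 1 ≤ Q := by
      rw [hQ]
      have : ((m:ℝ)) ≤ (⌊(n:ℝ)/β⌋ : ℝ) := by exact_mod_cast h2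
      linarith
    linarith
  -- x > Q/α, and P/β ≤ Q/α from h n, so x > P/β, hence β x < P
  have hxgt : Q/α < x := by
    rw [div_lt_iff_of_neg hα]
    linarith [mul_comm x α]
  have hdiv : P/β ≤ Q/α := by
    have e1 : (P/β) * (α*β) = α * P := by field_simp [hα.ne, hβ.ne]
    have e2 : (Q/α) * (α*β) = β * Q := by field_simp [hα.ne, hβ.ne]
    have hPQ : α * P ≤ β * Q := h n
    have : (P/β) * (α*β) ≤ (Q/α) * (α*β) := by rw [e1, e2]; exact hPQ
    exact le_of_mul_le_mul_right this hαβ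
  have hxgt2 : P/β < x := lt_of_le_of_lt hdiv hxgt
  have h5 : β * x < P := by
    rw [div_lt_iff_of_neg hβ] at hxgt2
    linarith [mul_comm x β]
  have h6 : ⌊β * x⌋ ≤ ⌊(n:ℝ)/α⌋ := by
    have : ⌊β * x⌋ < ⌊(n:ℝ)/α⌋ + 1 := Int.floor_lt.mpr (by push_cast; rw [hP] at h5; linarith)
    omega
  have h7 : α * (⌊(n:ℝ)/α⌋ : ℝ) ≤ α * (⌊β * x⌋ : ℝ) :=
    mul_le_mul_of_nonpos_left (by exact_mod_cast h6) hα.le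
  linarith [neg_floor_ge α hα n]

/-- Nonnegative commutator transitivity: for nonzero dilation factors α, β, γ,
[f_α, f_β] ≥ 0 and [f_β, f_γ] ≥ 0 imply [f_α, f_γ] ≥ 0. -/
theorem nonneg_commutator_transitive (α β γ : ℝ) (hα : α ≠ 0) (hβ : β ≠ 0) (hγ : γ ≠ 0)
    (h1 : ∀ x : ℝ, ⌊α * (⌊β * x⌋ : ℝ)⌋ ≥ ⌊β * (⌊α * x⌋ : ℝ)⌋)
    (h2 : ∀ x : ℝ, ⌊β * (⌊γ * x⌋ : ℝ)⌋ ≥ ⌊γ * (⌊β * x⌋ : ℝ)⌋) :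
    ∀ x : ℝ, ⌊α * (⌊γ * x⌋ : ℝ)⌋ ≥ ⌊γ * (⌊α * x⌋ : ℝ)⌋ := by
  rcases hα.lt_or_gt with hA | hA <;> rcases hβ.lt_or_gt with hB | hB <;>
    rcases hγ.lt_or_gt with hC | hC
  · exact neg_backward α γ hA hC (fun n =>
      le_trans (neg_forward α β hA hB h1 n) (neg_forward β γ hB hC h2 n))
  · exact mixed_neg_pos α γ hA hC
  · exact absurd h2 (mixed_pos_neg β γ hB hC)
  · exact mixed_neg_pos α γ hA hC
  · exact absurd h1 (mixed_pos_neg α β hA hB)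
  · exact absurd h1 (mixed_pos_neg α β hA hB)
  · exact absurd h2 (mixed_pos_neg β γ hB hC)
  · exact pos_backward α γ hA hC (fun n =>
      le_trans (pos_forward α β hA hB h1 n) (pos_forward β γ hB hC h2 n))
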